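/- There exists C > 0 such that for every u ∈ H¹_ε and p ∈ {2,3}, the power u^p belongs to L²_ε with ‖u^p‖_{L²_ε} ≤ C ‖u‖^p_{H¹_ε}; consequently, the nonlinear term N₀(R) = -3ν₀R² - R³ satisfies ‖N₀(R)‖_{L²_ε} ≤ C(‖ν₀‖_{L^∞(-∞,ε^{-2/3})}‖R‖²_{H¹_ε} + ‖R‖³_{H¹_ε}). -/

import Mathlib

open Set MeasureTheory
open scoped Interval

/-- Basic facts about the weight. -/
lemma weight_facts (ε : ℝ) (hε : 0 < ε) (hε1 : ε < 1) :
    0 < ε ^ ((2:ℝ)/3) ∧ ε ^ ((2:ℝ)/3) < 1 ∧ 1 < ε ^ (-(2:ℝ)/3) ∧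
      ε ^ ((2:ℝ)/3) * ε ^ (-(2:ℝ)/3) = 1 := by
  have ha : 0 < ε ^ ((2:ℝ)/3) := Real.rpow_pos_of_pos hε _
  have ha1 : ε ^ ((2:ℝ)/3) < 1 := Real.rpow_lt_one hε.le hε1 (by norm_num)
  have hinv : ε ^ (-(2:ℝ)/3) = (ε ^ ((2:ℝ)/3))⁻¹ := by
    rw [show (-(2:ℝ)/3) = -((2:ℝ)/3) by norm_num, Real.rpow_neg hε.le]
  refine ⟨ha, ha1, ?_, ?_⟩
  · rw [hinv]; exact (one_lt_inv₀ ha).mpr ha1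
  · rw [hinv]; exact mul_inv_cancel₀ ha.ne'

set_option maxHeartbeats 1000000 in
/-- Weighted Agmon inequality: the sup of `u²` is controlled by the energy. -/
lemma sup_sq_le (ν₀ : ℝ → ℝ) (Wmin : ℝ) (hWmin : 0 < Wmin)
    (hW : ∀ y : ℝ, Wmin ≤ 3 * ν₀ y ^ 2 - y)
    (ε : ℝ) (hε : 0 < ε) (hε1 : ε < 1)
    (u u' : ℝ → ℝ)
    (hu : ∀ y ∈ Iio (ε ^ (-(2:ℝ)/3)), HasDerivAt u (u' y) y)
    (hint : IntegrableOn (fun y => (1 - ε ^ ((2:ℝ)/3) * y) ^ (-(1:ℝ)/2) *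
      (4 * (1 - ε ^ ((2:ℝ)/3) * y) * u' y ^ 2 + (3 * ν₀ y ^ 2 - y) * u y ^ 2))
      (Iio (ε ^ (-(2:ℝ)/3)))) :
    ∀ x ∈ Iio (ε ^ (-(2:ℝ)/3)), u x ^ 2 ≤
      (Real.sqrt 2 / Wmin + 1 / (2 * Real.sqrt Wmin)) *
        ∫ y in Iio (ε ^ (-(2:ℝ)/3)), (1 - ε ^ ((2:ℝ)/3) * y) ^ (-(1:ℝ)/2) *
          (4 * (1 - ε ^ ((2:ℝ)/3) * y) * u' y ^ 2 + (3 * ν₀ y ^ 2 - y) * u y ^ 2) := by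
  obtain ⟨ha, ha1, hb1, hab⟩ := weight_facts ε hε hε1
  set a : ℝ := ε ^ ((2:ℝ)/3) with ha_def
  set b : ℝ := ε ^ (-(2:ℝ)/3) with hb_def
  set w : ℝ → ℝ := fun y => (1 - a * y) ^ (-(1:ℝ)/2) with hw_def
  set e : ℝ → ℝ := fun y => w y *
      (4 * (1 - a * y) * u' y ^ 2 + (3 * ν₀ y ^ 2 - y) * u y ^ 2) with he_def
  set E : ℝ := ∫ y in Iio b, e y with hE_def
  set s : ℝ := Real.sqrt Wmin with hs_def
  have hs : 0 < s := Real.sqrt_pos.mpr hWmin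
  have hs2 : s ^ 2 = Wmin := Real.sq_sqrt hWmin.le
  have hb0 : (0:ℝ) < b := lt_trans one_pos hb1
  -- positivity of 1 - a y on Iio b
  have hpos : ∀ y ∈ Iio b, 0 < 1 - a * y := by
    intro y hy
    have : a * y < a * b := mul_lt_mul_of_pos_left hy ha
    rw [hab] at this; linarith
  have hwpos : ∀ y ∈ Iio b, 0 < w y := fun y hy => Real.rpow_pos_of_pos (hpos y hy) _
  -- nonnegativity of the energy density
  have he_nonneg : ∀ y ∈ Iio b, 0 ≤ e y := by
    intro y hy
    have h1 := hpos y hy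
    have h2 := hwpos y hy
    have h3 := hW y
    have hX : 0 ≤ 4 * (1 - a * y) * u' y ^ 2 + (3 * ν₀ y ^ 2 - y) * u y ^ 2 := by
      nlinarith [sq_nonneg (u y), sq_nonneg (u' y)]
    exact mul_nonneg h2.le hX
  have hE0 : 0 ≤ E := setIntegral_nonneg measurableSet_Iio he_nonneg
  -- pointwise Agmon bound on the cross term
  have hptw : ∀ y ∈ Iio b, |2 * u y * u' y| ≤ e y / (2 * s) := by
    intro y hy
    have h1 := hpos y hy
    have h2 := hwpos y hy
    have h3 := hW y
    have hweq : w y = (1 - a * y) ^ (-(1:ℝ)/2) := rfl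
    have h4 : w y * (1 - a * y) = (w y)⁻¹ := by
      have ha1' : w y * (1 - a * y) = (1 - a * y) ^ ((1:ℝ)/2) := by
        rw [hweq]
        calc (1 - a * y) ^ (-(1:ℝ)/2) * (1 - a * y)
            = (1 - a * y) ^ (-(1:ℝ)/2) * (1 - a * y) ^ (1:ℝ) := by rw [Real.rpow_one]
          _ = (1 - a * y) ^ (-(1:ℝ)/2 + 1) := (Real.rpow_add h1 _ _).symm
          _ = (1 - a * y) ^ ((1:ℝ)/2) := by norm_num
      have ha2' : (w y)⁻¹ = (1 - a * y) ^ ((1:ℝ)/2) := by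
        rw [hweq, show (-(1:ℝ)/2) = -((1:ℝ)/2) by norm_num, Real.rpow_neg h1.le, inv_inv]
      rw [ha1', ha2']
    have hid : w y * (w y)⁻¹ = 1 := mul_inv_cancel₀ h2.ne'
    rw [le_div_iff₀ (mul_pos two_pos hs), abs_mul, abs_mul, abs_two]
    have key : 4 * s * (|u y| * |u' y|) ≤ e y := by
      have hle : w y * (4 * (1 - a * y) * u' y ^ 2 + Wmin * u y ^ 2) ≤ e y := by
        have hstep : Wmin * u y ^ 2 ≤ (3 * ν₀ y ^ 2 - y) * u y ^ 2 :=
          mul_le_mul_of_nonneg_right h3 (sq_nonneg _)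
        have : e y = w y * (4 * (1 - a * y) * u' y ^ 2 + (3 * ν₀ y ^ 2 - y) * u y ^ 2) := rfl
        rw [this]
        exact mul_le_mul_of_nonneg_left (by linarith) h2.le
      have hexp : w y * (4 * (1 - a * y) * u' y ^ 2 + Wmin * u y ^ 2)
          = 4 * (w y)⁻¹ * u' y ^ 2 + w y * s ^ 2 * u y ^ 2 := by
        rw [hs2]; linear_combination 4 * u' y ^ 2 * h4
      have hle2 : 4 * s * (|u y| * |u' y|) ≤
          4 * (w y)⁻¹ * u' y ^ 2 + w y * s ^ 2 * u y ^ 2 := by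
        have base : 4 * (w y * s) * (|u y| * |u' y|) ≤
            4 * |u' y| ^ 2 + (w y * s) ^ 2 * |u y| ^ 2 := by
          nlinarith [sq_nonneg (2 * |u' y| - w y * s * |u y|)]
        have hmul := mul_le_mul_of_nonneg_right base (inv_nonneg.mpr h2.le)
        calc 4 * s * (|u y| * |u' y|)
            = 4 * (w y * s) * (|u y| * |u' y|) * (w y)⁻¹ := by
              field_simp
          _ ≤ (4 * |u' y| ^ 2 + (w y * s) ^ 2 * |u y| ^ 2) * (w y)⁻¹ := hmul
          _ = 4 * (w y)⁻¹ * u' y ^ 2 + w y * s ^ 2 * u y ^ 2 := by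
              rw [sq_abs, sq_abs]; field_simp
      linarith [hle, hexp.le, hexp.ge, hle2]
    linarith [key]
  -- minimum point on [-1,0]
  have hIcc_sub : Icc (-1:ℝ) 0 ⊆ Iio b := fun x hx => lt_of_le_of_lt hx.2 hb0
  have hucont : ContinuousOn u (Iio b) := fun y hy => (hu y hy).continuousAt.continuousWithinAt
  have hcont2 : ContinuousOn (fun x => u x ^ 2) (Icc (-1:ℝ) 0) :=
    (hucont.mono hIcc_sub).pow 2
  obtain ⟨x₀, hx₀mem, hx₀min⟩ := isCompact_Icc.exists_isMinOn ⟨0, by norm_num⟩ hcont2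
  have hx₀b : x₀ ∈ Iio b := hIcc_sub hx₀mem
  have hsqrt2 : (0:ℝ) < Real.sqrt 2 := by positivity
  have hconst : ∀ x ∈ Icc (-1:ℝ) 0, Wmin / Real.sqrt 2 * u x₀ ^ 2 ≤ e x := by
    intro x hx
    have hxb := hIcc_sub hx
    have h1 := hpos x hxb
    have h2 := hwpos x hxb
    have h3 := hW x
    have hle2' : 1 - a * x ≤ 2 := by nlinarith [hx.1, hx.2, ha, ha1]
    have hwge : (2:ℝ) ^ (-(1:ℝ)/2) ≤ w x := Real.rpow_le_rpow_of_nonpos h1 hle2' (by norm_num)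
    have h2w : (2:ℝ) ^ (-(1:ℝ)/2) = (Real.sqrt 2)⁻¹ := by
      rw [show (-(1:ℝ)/2) = -(1/2 : ℝ) by norm_num, Real.rpow_neg (by norm_num : (0:ℝ) ≤ 2),
        Real.sqrt_eq_rpow]
    have humin : u x₀ ^ 2 ≤ u x ^ 2 := hx₀min hx
    rw [h2w] at hwge
    have echain : Wmin / Real.sqrt 2 * u x₀ ^ 2 ≤ w x * (Wmin * u x ^ 2) := by
      have hmm : (Real.sqrt 2)⁻¹ * (Wmin * u x₀ ^ 2) ≤ w x * (Wmin * u x ^ 2) := by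
        have hb2 : Wmin * u x₀ ^ 2 ≤ Wmin * u x ^ 2 :=
          mul_le_mul_of_nonneg_left humin hWmin.le
        exact mul_le_mul hwge hb2 (mul_nonneg hWmin.le (sq_nonneg _)) h2.le
      calc Wmin / Real.sqrt 2 * u x₀ ^ 2 = (Real.sqrt 2)⁻¹ * (Wmin * u x₀ ^ 2) := by ring
        _ ≤ _ := hmm
    have hfin : w x * (Wmin * u x ^ 2) ≤ e x := by
      have hex : e x = w x * (4 * (1 - a * x) * u' x ^ 2 + (3 * ν₀ x ^ 2 - x) * u x ^ 2) := rfl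
      rw [hex]
      apply mul_le_mul_of_nonneg_left _ h2.le
      nlinarith [sq_nonneg (u' x), sq_nonneg (u x)]
    linarith
  have hIccE : ∫ x in Icc (-1:ℝ) 0, e x ≤ E := by
    apply setIntegral_mono_set hint
    · exact (ae_restrict_iff' measurableSet_Iio).mpr (ae_of_all _ he_nonneg)
    · exact HasSubset.Subset.eventuallyLE hIcc_sub
  have hx₀sq : u x₀ ^ 2 ≤ Real.sqrt 2 / Wmin * E := by
    have hmeas : volume.real (Icc (-1:ℝ) 0) = 1 := by
      rw [Real.volume_real_Icc]; norm_num
    have hge := setIntegral_ge_of_const_le measurableSet_Icc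
      (by rw [Real.volume_Icc]; exact ENNReal.ofReal_ne_top) hconst (hint.mono_set hIcc_sub)
    rw [hmeas, one_smul] at hge
    have h5 : Wmin / Real.sqrt 2 * u x₀ ^ 2 ≤ E := le_trans hge hIccE
    calc u x₀ ^ 2 = (Real.sqrt 2 / Wmin) * (Wmin / Real.sqrt 2 * u x₀ ^ 2) := by
          field_simp
      _ ≤ Real.sqrt 2 / Wmin * E := mul_le_mul_of_nonneg_left h5 (by positivity)
  -- now the Agmon argument
  intro x hx
  have hmaxb : max x₀ x < b := max_lt hx₀b hx
  have hIsub : Ι x₀ x ⊆ Iio b := fun t ht => lt_of_le_of_lt ht.2 hmaxb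
  set g' : ℝ → ℝ := fun y => 2 * u y * u' y with hg'_def
  have hg'meas : AEStronglyMeasurable g' (volume.restrict (Ι x₀ x)) := by
    have h1 : AEStronglyMeasurable (fun y => 2 * u y * deriv u y)
        (volume.restrict (Ι x₀ x)) := by
      exact ((aestronglyMeasurable_const.mul
        ((hucont.mono hIsub).aestronglyMeasurable measurableSet_uIoc)).mul
        (measurable_deriv u).aestronglyMeasurable.restrict)
    apply h1.congr
    refine (ae_restrict_iff' measurableSet_uIoc).mpr (ae_of_all _ fun y hy => ?_)
    have : deriv u y = u' y := (hu y (hIsub hy)).deriv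
    simp only [hg'_def, this]
  have hg'int : IntervalIntegrable g' volume x₀ x := by
    rw [intervalIntegrable_iff]
    apply Integrable.mono' ((hint.mono_set hIsub).div_const (2 * s)) hg'meas
    refine (ae_restrict_iff' measurableSet_uIoc).mpr (ae_of_all _ fun y hy => ?_)
    rw [Real.norm_eq_abs]
    exact hptw y (hIsub hy)
  have hftc : ∫ y in x₀..x, g' y = u x ^ 2 - u x₀ ^ 2 := by
    apply intervalIntegral.integral_eq_sub_of_hasDerivAt _ hg'int
    intro t ht
    have htb : t ∈ Iio b := lt_of_le_of_lt ht.2 hmaxb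
    have hd := (hu t htb).pow 2
    convert hd using 1
    · rfl
    · rfl
    · simp [hg'_def]
  have habs : |u x ^ 2 - u x₀ ^ 2| ≤ E / (2 * s) := by
    rw [← hftc]
    calc |∫ y in x₀..x, g' y| ≤ ∫ y in Ι x₀ x, |g' y| := by
          simpa [Real.norm_eq_abs] using
            intervalIntegral.norm_integral_le_integral_norm_uIoc
              (f := g') (a := x₀) (b := x) (μ := volume)
      _ ≤ ∫ y in Ι x₀ x, e y / (2 * s) := by
          apply integral_mono_of_nonneg (ae_of_all _ fun y => abs_nonneg _)
            ((hint.mono_set hIsub).div_const _)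
          exact (ae_restrict_iff' measurableSet_uIoc).mpr
            (ae_of_all _ fun y hy => hptw y (hIsub hy))
      _ = (∫ y in Ι x₀ x, e y) / (2 * s) := integral_div _ _
      _ ≤ E / (2 * s) := by
          have h6 := setIntegral_mono_set hint
            ((ae_restrict_iff' measurableSet_Iio).mpr (ae_of_all _ he_nonneg))
            (HasSubset.Subset.eventuallyLE hIsub)
          gcongr
  have habs2 := (abs_le.mp habs).2
  have hfinal : u x ^ 2 ≤ Real.sqrt 2 / Wmin * E + 1 / (2 * s) * E := by
    have : E / (2 * s) = 1 / (2 * s) * E := by ring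
    linarith [this ▸ habs2]
  calc u x ^ 2 ≤ Real.sqrt 2 / Wmin * E + 1 / (2 * s) * E := hfinal
    _ = (Real.sqrt 2 / Wmin + 1 / (2 * Real.sqrt Wmin)) * E := by rw [← hs_def]; ring



set_option maxHeartbeats 2000000 in
/-- Powers map `H¹_ε` into `L²_ε`: `‖u^p‖_{L²_ε} ≤ C‖u‖^p_{H¹_ε}` for `p = 2,3`;
consequently `N₀(R) = -3ν₀R² - R³` satisfies
`‖N₀(R)‖_{L²_ε} ≤ C(‖ν₀‖_{L^∞}‖R‖²_{H¹_ε} + ‖R‖³_{H¹_ε})`. -/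
theorem nonlinear_term_bound (ν₀ : ℝ → ℝ) (Wmin : ℝ) (hWmin : 0 < Wmin)
    (hW : ∀ y : ℝ, Wmin ≤ 3 * ν₀ y ^ 2 - y) :
    ∃ C : ℝ, 0 < C ∧ ∃ ε₀ : ℝ, 0 < ε₀ ∧ ∀ ε : ℝ, 0 < ε → ε < ε₀ →
      ∀ u u' : ℝ → ℝ,
        (∀ y ∈ Iio (ε ^ (-(2:ℝ)/3)), HasDerivAt u (u' y) y) →
        IntegrableOn (fun y => (1 - ε ^ ((2:ℝ)/3) * y) ^ (-(1:ℝ)/2) *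
          (4 * (1 - ε ^ ((2:ℝ)/3) * y) * u' y ^ 2 + (3 * ν₀ y ^ 2 - y) * u y ^ 2))
          (Iio (ε ^ (-(2:ℝ)/3))) →
        (∀ p : ℕ, p = 2 ∨ p = 3 →
          Real.sqrt (∫ y in Iio (ε ^ (-(2:ℝ)/3)),
              (1 - ε ^ ((2:ℝ)/3) * y) ^ (-(1:ℝ)/2) * (u y ^ p) ^ 2)
            ≤ C * (Real.sqrt (∫ y in Iio (ε ^ (-(2:ℝ)/3)),
                (1 - ε ^ ((2:ℝ)/3) * y) ^ (-(1:ℝ)/2) *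
                (4 * (1 - ε ^ ((2:ℝ)/3) * y) * u' y ^ 2 +
                  (3 * ν₀ y ^ 2 - y) * u y ^ 2))) ^ p) ∧
        ∀ Mν : ℝ, (∀ y ∈ Iio (ε ^ (-(2:ℝ)/3)), |ν₀ y| ≤ Mν) →
          Real.sqrt (∫ y in Iio (ε ^ (-(2:ℝ)/3)),
              (1 - ε ^ ((2:ℝ)/3) * y) ^ (-(1:ℝ)/2) *
              (-3 * ν₀ y * u y ^ 2 - u y ^ 3) ^ 2)
            ≤ C * (Mν * (Real.sqrt (∫ y in Iio (ε ^ (-(2:ℝ)/3)),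
                (1 - ε ^ ((2:ℝ)/3) * y) ^ (-(1:ℝ)/2) *
                (4 * (1 - ε ^ ((2:ℝ)/3) * y) * u' y ^ 2 +
                  (3 * ν₀ y ^ 2 - y) * u y ^ 2))) ^ 2 +
              (Real.sqrt (∫ y in Iio (ε ^ (-(2:ℝ)/3)),
                (1 - ε ^ ((2:ℝ)/3) * y) ^ (-(1:ℝ)/2) *
                (4 * (1 - ε ^ ((2:ℝ)/3) * y) * u' y ^ 2 +
                  (3 * ν₀ y ^ 2 - y) * u y ^ 2))) ^ 3) := by
  set s : ℝ := Real.sqrt Wmin with hs_def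
  have hs : 0 < s := Real.sqrt_pos.mpr hWmin
  have hs2 : s ^ 2 = Wmin := Real.sq_sqrt hWmin.le
  set K : ℝ := Real.sqrt 2 / Wmin + 1 / (2 * s) with hK_def
  have hK : 0 < K := by positivity
  set D : ℝ := max K 1 with hD_def
  have hD1 : 1 ≤ D := le_max_right _ _
  have hKD : K ≤ D := le_max_left _ _
  have hD0 : 0 < D := lt_of_lt_of_le one_pos hD1
  refine ⟨5 * D / s, by positivity, 1, one_pos, ?_⟩
  intro ε hε hε1 u u' hu hint
  obtain ⟨ha, ha1, hb1, hab⟩ := weight_facts ε hε hε1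
  set a : ℝ := ε ^ ((2:ℝ)/3) with ha_def
  set b : ℝ := ε ^ (-(2:ℝ)/3) with hb_def
  set e : ℝ → ℝ := fun y => (1 - a * y) ^ (-(1:ℝ)/2) *
      (4 * (1 - a * y) * u' y ^ 2 + (3 * ν₀ y ^ 2 - y) * u y ^ 2) with he_def
  set E : ℝ := ∫ y in Iio b, e y with hE_def
  have hb0 : (0:ℝ) < b := lt_trans one_pos hb1
  have hpos : ∀ y ∈ Iio b, 0 < 1 - a * y := by
    intro y hy
    have : a * y < a * b := mul_lt_mul_of_pos_left hy ha
    rw [hab] at this; linarith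
  have hwpos : ∀ y ∈ Iio b, 0 < (1 - a * y) ^ (-(1:ℝ)/2) :=
    fun y hy => Real.rpow_pos_of_pos (hpos y hy) _
  have he_nonneg : ∀ y ∈ Iio b, 0 ≤ e y := by
    intro y hy
    have h1 := hpos y hy
    have h2 := hwpos y hy
    have h3 := hW y
    have hX : 0 ≤ 4 * (1 - a * y) * u' y ^ 2 + (3 * ν₀ y ^ 2 - y) * u y ^ 2 := by
      nlinarith [sq_nonneg (u y), sq_nonneg (u' y)]
    exact mul_nonneg h2.le hX
  have hE0 : 0 ≤ E := setIntegral_nonneg measurableSet_Iio he_nonneg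
  have hsup : ∀ x ∈ Iio b, u x ^ 2 ≤ K * E :=
    sup_sq_le ν₀ Wmin hWmin hW ε hε hε1 u u' hu hint
  have hKE0 : 0 ≤ K * E := mul_nonneg hK.le hE0
  have hwu2 : ∀ y ∈ Iio b, (1 - a * y) ^ (-(1:ℝ)/2) * u y ^ 2 ≤ e y / Wmin := by
    intro y hy
    have h1 := hpos y hy
    have h2 := hwpos y hy
    have h3 := hW y
    rw [le_div_iff₀ hWmin]
    have t1 : 0 ≤ (1 - a * y) ^ (-(1:ℝ)/2) * (4 * (1 - a * y) * u' y ^ 2) := by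
      have : 0 ≤ 4 * (1 - a * y) * u' y ^ 2 := by nlinarith [sq_nonneg (u' y)]
      exact mul_nonneg h2.le this
    have t2 : ((1 - a * y) ^ (-(1:ℝ)/2) * u y ^ 2) * Wmin ≤
        ((1 - a * y) ^ (-(1:ℝ)/2) * u y ^ 2) * (3 * ν₀ y ^ 2 - y) :=
      mul_le_mul_of_nonneg_left h3 (mul_nonneg h2.le (sq_nonneg _))
    have hee : e y = (1 - a * y) ^ (-(1:ℝ)/2) *
        (4 * (1 - a * y) * u' y ^ 2 + (3 * ν₀ y ^ 2 - y) * u y ^ 2) := rfl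
    rw [hee]; ring_nf; ring_nf at t1 t2 ⊢; nlinarith [t1, t2]
  have hCsq : (5 * D / s) ^ 2 = 25 * D ^ 2 / Wmin := by
    rw [div_pow, hs2]; ring
  constructor
  · -- powers p = 2, 3
    intro p hp
    have hpt1 : ∀ y ∈ Iio b, (1 - a * y) ^ (-(1:ℝ)/2) * (u y ^ p) ^ 2 ≤
        (K * E) ^ (p - 1) / Wmin * e y := by
      intro y hy
      have h2 := hwpos y hy
      have hsy := hsup y hy
      have hwy := hwu2 y hy
      have hw2nn : 0 ≤ (1 - a * y) ^ (-(1:ℝ)/2) * u y ^ 2 :=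
        mul_nonneg h2.le (sq_nonneg _)
      rcases hp with rfl | rfl
      · have heq : (1 - a * y) ^ (-(1:ℝ)/2) * (u y ^ 2) ^ 2
            = u y ^ 2 * ((1 - a * y) ^ (-(1:ℝ)/2) * u y ^ 2) := by ring
        rw [heq]
        calc u y ^ 2 * ((1 - a * y) ^ (-(1:ℝ)/2) * u y ^ 2)
            ≤ (K * E) * (e y / Wmin) := mul_le_mul hsy hwy hw2nn hKE0
          _ = (K * E) ^ (2 - 1) / Wmin * e y := by norm_num; ring
      · have heq : (1 - a * y) ^ (-(1:ℝ)/2) * (u y ^ 3) ^ 2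
            = (u y ^ 2) ^ 2 * ((1 - a * y) ^ (-(1:ℝ)/2) * u y ^ 2) := by ring
        rw [heq]
        calc (u y ^ 2) ^ 2 * ((1 - a * y) ^ (-(1:ℝ)/2) * u y ^ 2)
            ≤ (K * E) ^ 2 * (e y / Wmin) :=
              mul_le_mul (pow_le_pow_left₀ (sq_nonneg _) hsy 2) hwy hw2nn
                (pow_nonneg hKE0 2)
          _ = (K * E) ^ (3 - 1) / Wmin * e y := by norm_num; ring
    have hint1 : (∫ y in Iio b, (1 - a * y) ^ (-(1:ℝ)/2) * (u y ^ p) ^ 2) ≤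
        (K * E) ^ (p - 1) / Wmin * E := by
      have hmono := integral_mono_of_nonneg
        (f := fun y => (1 - a * y) ^ (-(1:ℝ)/2) * (u y ^ p) ^ 2)
        (g := fun y => (K * E) ^ (p - 1) / Wmin * e y)
        (μ := volume.restrict (Iio b))
        ((ae_restrict_iff' measurableSet_Iio).mpr (ae_of_all _ fun y hy =>
          mul_nonneg (hwpos y hy).le (sq_nonneg _)))
        (hint.const_mul _)
        ((ae_restrict_iff' measurableSet_Iio).mpr (ae_of_all _ hpt1))
      rwa [integral_const_mul] at hmono
    have hEp : (∫ y in Iio b, (1 - a * y) ^ (-(1:ℝ)/2) * (u y ^ p) ^ 2) ≤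
        (5 * D / s * Real.sqrt E ^ p) ^ 2 := by
      have hrE : Real.sqrt E ^ 2 = E := Real.sq_sqrt hE0
      rcases hp with rfl | rfl
      · have hnum : (K * E) ^ (2 - 1) * E ≤ 25 * D ^ 2 * E ^ 2 := by
          norm_num
          nlinarith [hKD, hD1, hE0, sq_nonneg E,
            mul_nonneg (mul_nonneg hD0.le (sub_nonneg.mpr hD1)) (sq_nonneg E),
            mul_le_mul_of_nonneg_right hKD (sq_nonneg E)]
        have : (K * E) ^ (2 - 1) / Wmin * E ≤ 25 * D ^ 2 / Wmin * E ^ 2 := by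
          calc (K * E) ^ (2 - 1) / Wmin * E = (K * E) ^ (2 - 1) * E / Wmin := by ring
            _ ≤ 25 * D ^ 2 * E ^ 2 / Wmin := (div_le_div_iff_of_pos_right hWmin).mpr hnum
            _ = 25 * D ^ 2 / Wmin * E ^ 2 := by ring
        calc (∫ y in Iio b, (1 - a * y) ^ (-(1:ℝ)/2) * (u y ^ 2) ^ 2)
            ≤ (K * E) ^ (2 - 1) / Wmin * E := hint1
          _ ≤ 25 * D ^ 2 / Wmin * E ^ 2 := this
          _ = (5 * D / s * Real.sqrt E ^ 2) ^ 2 := by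
              rw [hrE, mul_pow, hCsq]; try ring
      · have hnum : (K * E) ^ (3 - 1) * E ≤ 25 * D ^ 2 * E ^ 3 := by
          norm_num
          nlinarith [hKD, hD1, hE0, hK, pow_nonneg hE0 3,
            mul_le_mul hKD hKD hK.le hD0.le,
            mul_nonneg (mul_nonneg hD0.le hD0.le) (sub_nonneg.mpr hD1),
            mul_le_mul_of_nonneg_right (mul_le_mul hKD hKD hK.le hD0.le) (pow_nonneg hE0 3)]
        have : (K * E) ^ (3 - 1) / Wmin * E ≤ 25 * D ^ 2 / Wmin * E ^ 3 := by
          calc (K * E) ^ (3 - 1) / Wmin * E = (K * E) ^ (3 - 1) * E / Wmin := by ring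
            _ ≤ 25 * D ^ 2 * E ^ 3 / Wmin := (div_le_div_iff_of_pos_right hWmin).mpr hnum
            _ = 25 * D ^ 2 / Wmin * E ^ 3 := by ring
        calc (∫ y in Iio b, (1 - a * y) ^ (-(1:ℝ)/2) * (u y ^ 3) ^ 2)
            ≤ (K * E) ^ (3 - 1) / Wmin * E := hint1
          _ ≤ 25 * D ^ 2 / Wmin * E ^ 3 := this
          _ = (5 * D / s * Real.sqrt E ^ 3) ^ 2 := by
              rw [mul_pow, hCsq, ← pow_mul]
              rw [show (3 * 2 = 2 * 3) from by norm_num, pow_mul, hrE]; try ring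
    calc Real.sqrt (∫ y in Iio b, (1 - a * y) ^ (-(1:ℝ)/2) * (u y ^ p) ^ 2)
        ≤ Real.sqrt ((5 * D / s * Real.sqrt E ^ p) ^ 2) := Real.sqrt_le_sqrt hEp
      _ = 5 * D / s * Real.sqrt E ^ p := Real.sqrt_sq (by positivity)
  · -- the nonlinear term
    intro Mν hMν
    have hMν0 : 0 ≤ Mν := le_trans (abs_nonneg _) (hMν 0 hb0)
    have hpt2 : ∀ y ∈ Iio b, (1 - a * y) ^ (-(1:ℝ)/2) *
        (-3 * ν₀ y * u y ^ 2 - u y ^ 3) ^ 2 ≤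
        (18 * Mν ^ 2 * (K * E) + 2 * (K * E) ^ 2) / Wmin * e y := by
      intro y hy
      have h2 := hwpos y hy
      have hsy := hsup y hy
      have hwy := hwu2 y hy
      have hν : ν₀ y ^ 2 ≤ Mν ^ 2 := by
        have h := hMν y hy
        nlinarith [abs_nonneg (ν₀ y), sq_abs (ν₀ y)]
      have h1' : (-3 * ν₀ y * u y ^ 2 - u y ^ 3) ^ 2 ≤
          (18 * Mν ^ 2 * (K * E) + 2 * (K * E) ^ 2) * u y ^ 2 := by
        nlinarith [sq_nonneg (3 * ν₀ y * u y ^ 2 - u y ^ 3), hsy, hν,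
          sq_nonneg (u y), sq_nonneg (u y ^ 2), hKE0, sq_nonneg Mν,
          mul_le_mul_of_nonneg_left hsy (sq_nonneg (u y)),
          mul_le_mul_of_nonneg_left hν (sq_nonneg (u y ^ 2)),
          mul_nonneg hKE0 (sq_nonneg (u y))]
      have hcnn : 0 ≤ 18 * Mν ^ 2 * (K * E) + 2 * (K * E) ^ 2 := by positivity
      calc (1 - a * y) ^ (-(1:ℝ)/2) * (-3 * ν₀ y * u y ^ 2 - u y ^ 3) ^ 2
          ≤ (1 - a * y) ^ (-(1:ℝ)/2) *
            ((18 * Mν ^ 2 * (K * E) + 2 * (K * E) ^ 2) * u y ^ 2) :=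
            mul_le_mul_of_nonneg_left h1' h2.le
        _ = (18 * Mν ^ 2 * (K * E) + 2 * (K * E) ^ 2) *
            ((1 - a * y) ^ (-(1:ℝ)/2) * u y ^ 2) := by ring
        _ ≤ (18 * Mν ^ 2 * (K * E) + 2 * (K * E) ^ 2) * (e y / Wmin) :=
            mul_le_mul_of_nonneg_left hwy hcnn
        _ = (18 * Mν ^ 2 * (K * E) + 2 * (K * E) ^ 2) / Wmin * e y := by ring
    have hint2 : (∫ y in Iio b, (1 - a * y) ^ (-(1:ℝ)/2) *
        (-3 * ν₀ y * u y ^ 2 - u y ^ 3) ^ 2) ≤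
        (18 * Mν ^ 2 * (K * E) + 2 * (K * E) ^ 2) / Wmin * E := by
      have hmono := integral_mono_of_nonneg
        (f := fun y => (1 - a * y) ^ (-(1:ℝ)/2) * (-3 * ν₀ y * u y ^ 2 - u y ^ 3) ^ 2)
        (g := fun y => (18 * Mν ^ 2 * (K * E) + 2 * (K * E) ^ 2) / Wmin * e y)
        (μ := volume.restrict (Iio b))
        ((ae_restrict_iff' measurableSet_Iio).mpr (ae_of_all _ fun y hy =>
          mul_nonneg (hwpos y hy).le (sq_nonneg _)))
        (hint.const_mul _)
        ((ae_restrict_iff' measurableSet_Iio).mpr (ae_of_all _ hpt2))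
      rwa [integral_const_mul] at hmono
    have hrE : Real.sqrt E ^ 2 = E := Real.sq_sqrt hE0
    have hr0 : 0 ≤ Real.sqrt E := Real.sqrt_nonneg _
    have hYnn : 0 ≤ 5 * D / s * (Mν * Real.sqrt E ^ 2 + Real.sqrt E ^ 3) := by
      have : 0 ≤ Mν * Real.sqrt E ^ 2 + Real.sqrt E ^ 3 := by positivity
      positivity
    have hfin : (∫ y in Iio b, (1 - a * y) ^ (-(1:ℝ)/2) *
        (-3 * ν₀ y * u y ^ 2 - u y ^ 3) ^ 2) ≤
        (5 * D / s * (Mν * Real.sqrt E ^ 2 + Real.sqrt E ^ 3)) ^ 2 := by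
      have hKD2 : K ≤ D ^ 2 := by nlinarith [hKD, hD1, hD0]
      have hK2D2 : K ^ 2 ≤ D ^ 2 := by nlinarith [hKD, hK]
      have key1 : 18 * Mν ^ 2 * K * E ^ 2 ≤ 25 * D ^ 2 * (Mν ^ 2 * E ^ 2) := by
        nlinarith [mul_le_mul_of_nonneg_right hKD2 (sq_nonneg (Mν * E)),
          sq_nonneg (Mν * E), sq_nonneg D]
      have key2 : 2 * K ^ 2 * E ^ 3 ≤ 25 * D ^ 2 * E ^ 3 := by
        nlinarith [mul_le_mul_of_nonneg_right hK2D2 (pow_nonneg hE0 3),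
          mul_nonneg (sq_nonneg D) (pow_nonneg hE0 3)]
      have hY2 : (5 * D / s * (Mν * Real.sqrt E ^ 2 + Real.sqrt E ^ 3)) ^ 2 =
          25 * D ^ 2 / Wmin *
            (Mν ^ 2 * E ^ 2 + 2 * Mν * E ^ 2 * Real.sqrt E + E ^ 3) := by
        rw [mul_pow, hCsq]
        linear_combination (25 * D ^ 2 / Wmin) *
          (Mν ^ 2 * (Real.sqrt E ^ 2 + E) + 2 * Mν * Real.sqrt E * (Real.sqrt E ^ 2 + E)
            + (Real.sqrt E ^ 4 + Real.sqrt E ^ 2 * E + E ^ 2)) * hrE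
      calc (∫ y in Iio b, (1 - a * y) ^ (-(1:ℝ)/2) *
            (-3 * ν₀ y * u y ^ 2 - u y ^ 3) ^ 2)
          ≤ (18 * Mν ^ 2 * (K * E) + 2 * (K * E) ^ 2) / Wmin * E := hint2
        _ = (18 * Mν ^ 2 * K * E ^ 2 + 2 * K ^ 2 * E ^ 3) / Wmin := by ring
        _ ≤ (25 * D ^ 2 * (Mν ^ 2 * E ^ 2) + 25 * D ^ 2 * E ^ 3) / Wmin := by
            exact (div_le_div_iff_of_pos_right hWmin).mpr (by linarith [key1, key2])
        _ ≤ 25 * D ^ 2 / Wmin *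
            (Mν ^ 2 * E ^ 2 + 2 * Mν * E ^ 2 * Real.sqrt E + E ^ 3) := by
            rw [div_mul_eq_mul_div]
            refine (div_le_div_iff_of_pos_right hWmin).mpr ?_
            have ht : 0 ≤ D ^ 2 * (Mν * E ^ 2 * Real.sqrt E) :=
              mul_nonneg (sq_nonneg D)
                (mul_nonneg (mul_nonneg hMν0 (sq_nonneg E)) hr0)
            nlinarith [ht]
        _ = (5 * D / s * (Mν * Real.sqrt E ^ 2 + Real.sqrt E ^ 3)) ^ 2 := hY2.symm
    calc Real.sqrt (∫ y in Iio b, (1 - a * y) ^ (-(1:ℝ)/2) *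
          (-3 * ν₀ y * u y ^ 2 - u y ^ 3) ^ 2)
        ≤ Real.sqrt ((5 * D / s * (Mν * Real.sqrt E ^ 2 + Real.sqrt E ^ 3)) ^ 2) :=
          Real.sqrt_le_sqrt hfin
      _ = 5 * D / s * (Mν * Real.sqrt E ^ 2 + Real.sqrt E ^ 3) := Real.sqrt_sq hYnn
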